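/- Let X₁, X₂, X₃ be i.i.d. random vectors in ℝᵖ with absolutely continuous marginals, let A₁₂ = sign(X₁ − X₂) (entrywise sign) and A₁ = E[A₁₂ | X₁]. Then Var(A₁₂ᵀA₁₃) ≥ Var(A₁₂ᵀA₁) ≥ Var(A₁ᵀA₁). -/

import Mathlib

open MeasureTheory ProbabilityTheory

lemma measurable_realSign : Measurable Real.sign := by
  unfold Real.sign
  exact (measurable_const.ite (measurableSet_lt measurable_id measurable_const)
    (measurable_const.ite (measurableSet_lt measurable_const measurable_id) measurable_const))

lemma abs_realSign_le (r : ℝ) : ‖Real.sign r‖ ≤ 1 := by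
  rcases Real.sign_apply_eq r with h | h | h <;> simp [h]

lemma condexp_fun_indep {Ω α β : Type*} [MeasurableSpace Ω] [MeasurableSpace α]
    [MeasurableSpace β] {P : Measure Ω} [IsProbabilityMeasure P]
    {Y : Ω → α} {Z : Ω → β} (hY : Measurable Y) (hZ : Measurable Z)
    (hind : IndepFun Y Z P) {k : α → β → ℝ}
    (hk : Measurable fun q : α × β => k q.1 q.2) (hbd : ∀ x y, ‖k x y‖ ≤ 1) :
    (fun ω => ∫ z, k (Y ω) z ∂(P.map Z)) =ᵐ[P]
      P[(fun ω => k (Y ω) (Z ω)) | MeasurableSpace.comap Y inferInstance] := by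
  haveI : IsProbabilityMeasure (P.map Z) := Measure.isProbabilityMeasure_map hZ.aemeasurable
  haveI : IsProbabilityMeasure (P.map Y) := Measure.isProbabilityMeasure_map hY.aemeasurable
  set ν := P.map Z with hν
  set φ : α → ℝ := fun x => ∫ z, k x z ∂ν with hφ
  have hφsm : StronglyMeasurable φ := hk.stronglyMeasurable.integral_prod_right'
  have hφm : Measurable φ := hφsm.measurable
  have hkx_int : ∀ x, Integrable (fun z => k x z) ν := fun x =>
    ⟨(hk.comp (measurable_prodMk_left)).aestronglyMeasurable,
      HasFiniteIntegral.of_bounded (C := 1) (ae_of_all _ fun z => hbd x z)⟩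
  have hφbd : ∀ x, ‖φ x‖ ≤ 1 := by
    intro x
    calc ‖φ x‖ ≤ ∫ z, ‖k x z‖ ∂ν := norm_integral_le_integral_norm _
    _ ≤ ∫ _z, (1:ℝ) ∂ν := integral_mono (hkx_int x).norm (integrable_const 1) (fun z => hbd x z)
    _ = 1 := by simp
  have hm : MeasurableSpace.comap Y inferInstance ≤ _ := hY.comap_le
  have hYm : Measurable[MeasurableSpace.comap Y inferInstance] Y := fun s hs => ⟨s, hs, rfl⟩
  have hf_int : Integrable (fun ω => k (Y ω) (Z ω)) P :=
    ⟨(hk.comp (hY.prodMk hZ)).aestronglyMeasurable,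
      HasFiniteIntegral.of_bounded (C := 1) (ae_of_all _ fun ω => hbd _ _)⟩
  have hg_int : Integrable (fun ω => φ (Y ω)) P :=
    ⟨(hφm.comp hY).aestronglyMeasurable,
      HasFiniteIntegral.of_bounded (C := 1) (ae_of_all _ fun ω => hφbd _)⟩
  have hlaw : P.map (fun ω => (Y ω, Z ω)) = (P.map Y).prod ν :=
    (indepFun_iff_map_prod_eq_prod_map_map hY.aemeasurable hZ.aemeasurable).mp hind
  refine ae_eq_condExp_of_forall_setIntegral_eq hm hf_int
    (fun s _ _ => hg_int.integrableOn) ?_ (hφsm.comp_measurable hYm).aestronglyMeasurable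
  rintro s ⟨B, hB, rfl⟩ -
  have hYB : Y ⁻¹' B = (fun ω => (Y ω, Z ω)) ⁻¹' (B ×ˢ Set.univ) := by
    ext ω; simp
  have hRHS : ∫ x in Y ⁻¹' B, k (Y x) (Z x) ∂P
      = ∫ q in B ×ˢ Set.univ, k q.1 q.2 ∂((P.map Y).prod ν) := by
    rw [← hlaw, setIntegral_map (hB.prod MeasurableSet.univ) ?_
      (hY.prodMk hZ).aemeasurable, hYB]
    rw [hlaw]
    exact hk.aestronglyMeasurable
  have hLHS : ∫ x in Y ⁻¹' B, φ (Y x) ∂P = ∫ x in B, φ x ∂(P.map Y) :=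
    (setIntegral_map hB (hφm.aestronglyMeasurable) hY.aemeasurable).symm
  rw [hLHS, hRHS, ← Measure.prod_restrict B Set.univ, Measure.restrict_univ]
  have hint : Integrable (fun q : α × β => k q.1 q.2) (((P.map Y).restrict B).prod ν) :=
    ⟨hk.aestronglyMeasurable,
      HasFiniteIntegral.of_bounded (C := 1) (ae_of_all _ fun q => hbd _ _)⟩
  rw [integral_prod _ hint]

lemma variance_congr_ae {Ω : Type*} {mΩ : MeasurableSpace Ω} {P : Measure Ω} {f g : Ω → ℝ}
    (h : f =ᵐ[P] g) : variance f P = variance g P := by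
  have hint : ∫ x, f x ∂P = ∫ x, g x ∂P := integral_congr_ae h
  rw [ProbabilityTheory.variance, ProbabilityTheory.variance, ProbabilityTheory.evariance,
    ProbabilityTheory.evariance, hint]
  congr 1
  apply lintegral_congr_ae
  filter_upwards [h] with x hx
  rw [hx]

lemma variance_condexp_le_of_bound {Ω : Type*} {m0 : MeasurableSpace Ω} {P : Measure Ω}
    [IsProbabilityMeasure P] {m : MeasurableSpace Ω} (hm : m ≤ m0) {f g : Ω → ℝ} {C : NNReal}
    (hfm : AEStronglyMeasurable[m0] f P) (hbd : ∀ᵐ ω ∂P, |f ω| ≤ C)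
    (hg : g =ᵐ[P] P[f|m]) : variance g P ≤ variance f P := by
  haveI : SigmaFinite (P.trim hm) := inferInstance
  set g' : Ω → ℝ := P[f|m] with hg'
  have hf_int : Integrable f P := ⟨hfm, HasFiniteIntegral.of_bounded (C := C)
    (hbd.mono fun ω h => by simpa [Real.norm_eq_abs] using h)⟩
  have hg'bd : ∀ᵐ ω ∂P, |g' ω| ≤ C := ae_bdd_condExp_of_ae_bdd hbd
  have hg'sm : AEStronglyMeasurable[m0] g' P :=
    stronglyMeasurable_condExp.mono hm |>.aestronglyMeasurable
  have hg'_int : Integrable g' P := integrable_condExp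
  have hpull : P[g' * f|m] =ᵐ[P] g' * P[f|m] :=
    condExp_stronglyMeasurable_mul_of_bound hm stronglyMeasurable_condExp hf_int C
      (hg'bd.mono fun ω h => by simpa [Real.norm_eq_abs] using h)
  have hgf_int : Integrable (g' * f) P :=
    ⟨hg'sm.mul hfm, HasFiniteIntegral.of_bounded (C := (C:ℝ) * C)
      ((hbd.and hg'bd).mono fun ω ⟨h1, h2⟩ => by
        simp only [Pi.mul_apply, norm_mul, Real.norm_eq_abs]
        exact mul_le_mul h2 h1 (abs_nonneg _) C.coe_nonneg)⟩
  have hkey : ∫ ω, g' ω * f ω ∂P = ∫ ω, g' ω * g' ω ∂P := by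
    have h1 : ∫ x, (P[g' * f|m]) x ∂P = ∫ x, (g' * f) x ∂P := integral_condExp hm
    have h2 : ∫ x, (P[g' * f|m]) x ∂P = ∫ x, (g' * P[f|m]) x ∂P := integral_congr_ae hpull
    simpa [Pi.mul_apply] using h1.symm.trans h2
  have hf2_int : Integrable (fun ω => f ω ^ 2) P :=
    ⟨(hfm.mul hfm).congr (ae_of_all _ fun ω => (sq (f ω)).symm),
      HasFiniteIntegral.of_bounded (C := (C:ℝ) * C)
        (hbd.mono fun ω h => by
          rw [Real.norm_eq_abs, abs_pow, pow_two]
          exact mul_le_mul h h (abs_nonneg _) C.coe_nonneg)⟩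
  have hg2_int : Integrable (fun ω => g' ω ^ 2) P :=
    ⟨(hg'sm.mul hg'sm).congr (ae_of_all _ fun ω => (sq (g' ω)).symm),
      HasFiniteIntegral.of_bounded (C := (C:ℝ) * C)
        (hg'bd.mono fun ω h => by
          rw [Real.norm_eq_abs, abs_pow, pow_two]
          exact mul_le_mul h h (abs_nonneg _) C.coe_nonneg)⟩
  have hmom : ∫ ω, g' ω ^ 2 ∂P ≤ ∫ ω, f ω ^ 2 ∂P := by
    have hnn : 0 ≤ ∫ ω, (f ω - g' ω) ^ 2 ∂P := integral_nonneg fun ω => sq_nonneg _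
    have hexp : ∫ ω, (f ω - g' ω) ^ 2 ∂P
        = ∫ ω, f ω ^ 2 ∂P - 2 * ∫ ω, g' ω * f ω ∂P + ∫ ω, g' ω ^ 2 ∂P := by
      have : (fun ω => (f ω - g' ω) ^ 2)
          = fun ω => f ω ^ 2 - 2 * (g' ω * f ω) + g' ω ^ 2 := by
        funext ω; ring
      have h2 : Integrable (fun ω => 2 * (g' ω * f ω)) P := by
        simpa using hgf_int.const_mul 2
      have h12 : Integrable (fun ω => f ω ^ 2 - 2 * (g' ω * f ω)) P := hf2_int.sub h2
      rw [this, integral_add h12 hg2_int, integral_sub hf2_int h2, integral_const_mul]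
    have hg2 : ∫ ω, g' ω * g' ω ∂P = ∫ ω, g' ω ^ 2 ∂P := by
      congr 1; funext ω; ring
    rw [hexp, hkey, hg2] at hnn
    linarith
  have hfLp : MemLp f 2 P := MemLp.of_bound hfm C
    (hbd.mono fun ω h => by simpa [Real.norm_eq_abs] using h)
  have hgLp : MemLp g' 2 P := MemLp.of_bound hg'sm C
    (hg'bd.mono fun ω h => by simpa [Real.norm_eq_abs] using h)
  rw [variance_congr_ae hg, variance_eq_sub hgLp, variance_eq_sub hfLp]
  have hmean : ∫ ω, g' ω ∂P = ∫ ω, f ω ∂P := integral_condExp hm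
  simp only [Pi.pow_apply] at *
  rw [hmean]
  linarith

theorem hoeffding_variance_inequalities (p : ℕ)
    {Ω : Type*} [MeasurableSpace Ω] (P : Measure Ω) [IsProbabilityMeasure P]
    (X₁ X₂ X₃ : Ω → (Fin p → ℝ))
    (hX₁ : Measurable X₁) (hX₂ : Measurable X₂) (hX₃ : Measurable X₃)
    (hindep : iIndepFun ![X₁, X₂, X₃] P)
    (hid₂ : P.map X₂ = P.map X₁) (hid₃ : P.map X₃ = P.map X₁)
    (hac : ∀ j, P.map (fun ω => X₁ ω j) ≪ volume)
    (A₁ : Fin p → Ω → ℝ)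
    (hA₁ : ∀ j, A₁ j =ᵐ[P] P[(fun ω => Real.sign (X₁ ω j - X₂ ω j)) |
        MeasurableSpace.comap X₁ inferInstance]) :
    variance (fun ω => ∑ j, (A₁ j ω) ^ 2) P ≤
      variance (fun ω => ∑ j, Real.sign (X₁ ω j - X₂ ω j) * A₁ j ω) P ∧
    variance (fun ω => ∑ j, Real.sign (X₁ ω j - X₂ ω j) * A₁ j ω) P ≤
      variance (fun ω => ∑ j, Real.sign (X₁ ω j - X₂ ω j) * Real.sign (X₁ ω j - X₃ ω j)) P := by
  have hmeas : ∀ i, Measurable (![X₁, X₂, X₃] i) := by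
    intro i; fin_cases i <;> assumption
  have h12 : IndepFun X₁ X₂ P := by
    simpa using hindep.indepFun (i := 0) (j := 1) (by decide)
  have h123 : IndepFun (fun ω => (X₁ ω, X₂ ω)) X₃ P := by
    simpa using hindep.indepFun_prodMk hmeas 0 1 2 (by decide) (by decide)
  haveI : IsProbabilityMeasure (P.map X₁) := Measure.isProbabilityMeasure_map hX₁.aemeasurable
  set φ : Fin p → (Fin p → ℝ) → ℝ := fun j x => ∫ z, Real.sign (x j - z j) ∂(P.map X₁)
    with hφdef
  have hk : ∀ j, Measurable fun q : (Fin p → ℝ) × (Fin p → ℝ) =>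
      Real.sign (q.1 j - q.2 j) := fun j =>
    measurable_realSign.comp (((measurable_pi_apply j).comp measurable_fst).sub
      ((measurable_pi_apply j).comp measurable_snd))
  have hk' : ∀ j, Measurable fun q : ((Fin p → ℝ) × (Fin p → ℝ)) × (Fin p → ℝ) =>
      Real.sign (q.1.1 j - q.2 j) := fun j =>
    measurable_realSign.comp
      (((measurable_pi_apply j).comp (measurable_fst.comp measurable_fst)).sub
      ((measurable_pi_apply j).comp measurable_snd))
  have hφsm : ∀ j, StronglyMeasurable (φ j) := fun j =>
    (hk j).stronglyMeasurable.integral_prod_right'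
  have hφbd : ∀ j x, ‖φ j x‖ ≤ 1 := by
    intro j x
    have hint : Integrable (fun z : Fin p → ℝ => Real.sign (x j - z j)) (P.map X₁) :=
      ⟨((hk j).comp measurable_prodMk_left).aestronglyMeasurable,
        HasFiniteIntegral.of_bounded (C := 1) (ae_of_all _ fun z => abs_realSign_le _)⟩
    calc ‖φ j x‖ ≤ ∫ z, ‖Real.sign (x j - z j)‖ ∂(P.map X₁) :=
          norm_integral_le_integral_norm _
    _ ≤ ∫ _z, (1:ℝ) ∂(P.map X₁) :=
          integral_mono hint.norm (integrable_const 1) (fun z => abs_realSign_le _)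
    _ = 1 := by simp
  -- identification of the two conditional expectations
  have hcond2 : ∀ j, (fun ω => φ j (X₁ ω)) =ᵐ[P]
      P[(fun ω => Real.sign (X₁ ω j - X₂ ω j)) | MeasurableSpace.comap X₁ inferInstance] := by
    intro j
    have h := condexp_fun_indep (P := P) hX₁ hX₂ h12
      (k := fun x z => Real.sign (x j - z j)) (hk j) (fun x z => abs_realSign_le _)
    rwa [hid₂] at h
  have hA : ∀ j, A₁ j =ᵐ[P] fun ω => φ j (X₁ ω) := fun j => (hA₁ j).trans (hcond2 j).symm
  have hcond3 : ∀ j, (fun ω => φ j (X₁ ω)) =ᵐ[P]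
      P[(fun ω => Real.sign (X₁ ω j - X₃ ω j)) |
        MeasurableSpace.comap (fun ω => (X₁ ω, X₂ ω)) inferInstance] := by
    intro j
    have h := condexp_fun_indep (P := P) (hX₁.prodMk hX₂) hX₃ h123
      (k := fun (q : (Fin p → ℝ) × (Fin p → ℝ)) z => Real.sign (q.1 j - z j))
      (hk' j) (fun q z => abs_realSign_le _)
    rwa [hid₃] at h
  -- measurability and integrability of the sign terms
  have hSmeas : ∀ j, Measurable fun ω => Real.sign (X₁ ω j - X₂ ω j) := fun j =>
    measurable_realSign.comp (((measurable_pi_apply j).comp hX₁).sub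
      ((measurable_pi_apply j).comp hX₂))
  have hTmeas : ∀ j, Measurable fun ω => Real.sign (X₁ ω j - X₃ ω j) := fun j =>
    measurable_realSign.comp (((measurable_pi_apply j).comp hX₁).sub
      ((measurable_pi_apply j).comp hX₃))
  have hSint : ∀ j, Integrable (fun ω => Real.sign (X₁ ω j - X₂ ω j)) P := fun j =>
    ⟨(hSmeas j).aestronglyMeasurable, HasFiniteIntegral.of_bounded (C := 1)
      (ae_of_all _ fun ω => abs_realSign_le _)⟩
  have hTint : ∀ j, Integrable (fun ω => Real.sign (X₁ ω j - X₃ ω j)) P := fun j =>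
    ⟨(hTmeas j).aestronglyMeasurable, HasFiniteIntegral.of_bounded (C := 1)
      (ae_of_all _ fun ω => abs_realSign_le _)⟩
  have hAae : ∀ᵐ ω ∂P, ∀ j, A₁ j ω = φ j (X₁ ω) := ae_all_iff.2 hA
  have hSφm : ∀ j, Measurable (fun ω => Real.sign (X₁ ω j - X₂ ω j) * φ j (X₁ ω)) :=
    fun j => (hSmeas j).mul ((hφsm j).measurable.comp hX₁)
  have hsumSφm : Measurable (fun ω => ∑ j, Real.sign (X₁ ω j - X₂ ω j) * φ j (X₁ ω)) :=
    Finset.measurable_sum _ fun j _ => hSφm j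
  have hsumSTm : Measurable
      (fun ω => ∑ j, Real.sign (X₁ ω j - X₂ ω j) * Real.sign (X₁ ω j - X₃ ω j)) :=
    Finset.measurable_sum _ fun j _ => (hSmeas j).mul (hTmeas j)
  constructor
  · -- first inequality
    set m1 : MeasurableSpace Ω := MeasurableSpace.comap X₁ inferInstance with hm1def
    have hm1 : m1 ≤ _ := hX₁.comap_le
    have hX₁m1 : Measurable[m1] X₁ := fun s hs => ⟨s, hs, rfl⟩
    have hj : ∀ j, P[(fun ω => Real.sign (X₁ ω j - X₂ ω j) * A₁ j ω)|m1]
        =ᵐ[P] fun ω => φ j (X₁ ω) * φ j (X₁ ω) := by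
      intro j
      have e1 : (fun ω => Real.sign (X₁ ω j - X₂ ω j) * A₁ j ω)
          =ᵐ[P] (fun ω => φ j (X₁ ω)) * (fun ω => Real.sign (X₁ ω j - X₂ ω j)) := by
        filter_upwards [hA j] with ω hω
        simp only [Pi.mul_apply]
        rw [hω, mul_comm]
      have e2 : P[(fun ω => φ j (X₁ ω)) * (fun ω => Real.sign (X₁ ω j - X₂ ω j))|m1]
          =ᵐ[P] (fun ω => φ j (X₁ ω)) * P[(fun ω => Real.sign (X₁ ω j - X₂ ω j))|m1] :=
        condExp_stronglyMeasurable_mul_of_bound hm1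
          ((hφsm j).comp_measurable hX₁m1) (hSint j) 1 (ae_of_all _ fun ω => hφbd j _)
      have e3 : (fun ω => φ j (X₁ ω)) * P[(fun ω => Real.sign (X₁ ω j - X₂ ω j))|m1]
          =ᵐ[P] fun ω => φ j (X₁ ω) * φ j (X₁ ω) := by
        filter_upwards [hcond2 j] with ω hω
        simp only [Pi.mul_apply]
        rw [← hω]
      exact ((condExp_congr_ae e1).trans e2).trans e3
    have hintSA : ∀ j, Integrable (fun ω => Real.sign (X₁ ω j - X₂ ω j) * A₁ j ω) P := by
      intro j
      have h0 : Integrable (fun ω => Real.sign (X₁ ω j - X₂ ω j) * φ j (X₁ ω)) P :=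
        ⟨(hSφm j).aestronglyMeasurable,
          HasFiniteIntegral.of_bounded (C := 1) (ae_of_all _ fun ω => by
            calc ‖Real.sign (X₁ ω j - X₂ ω j) * φ j (X₁ ω)‖
                = ‖Real.sign (X₁ ω j - X₂ ω j)‖ * ‖φ j (X₁ ω)‖ := norm_mul _ _
            _ ≤ 1 * 1 := mul_le_mul (abs_realSign_le _) (hφbd j _)
                (norm_nonneg _) zero_le_one
            _ = 1 := by ring)⟩
      exact h0.congr (by filter_upwards [hA j] with ω hω; rw [hω])
    have hsum : P[(fun ω => ∑ j, Real.sign (X₁ ω j - X₂ ω j) * A₁ j ω)|m1]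
        =ᵐ[P] fun ω => ∑ j, φ j (X₁ ω) * φ j (X₁ ω) := by
      have h1 : (fun ω => ∑ j, Real.sign (X₁ ω j - X₂ ω j) * A₁ j ω)
          = ∑ j : Fin p, fun ω => Real.sign (X₁ ω j - X₂ ω j) * A₁ j ω := by
        funext ω; simp [Finset.sum_apply]
      rw [h1]
      refine (condExp_finset_sum (fun j _ => hintSA j) m1).trans ?_
      have hall : ∀ᵐ ω ∂P, ∀ j,
          (P[(fun ω' => Real.sign (X₁ ω' j - X₂ ω' j) * A₁ j ω')|m1]) ω
          = φ j (X₁ ω) * φ j (X₁ ω) := ae_all_iff.2 fun j => hj j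
      filter_upwards [hall] with ω hω
      simp only [Finset.sum_apply]
      exact Finset.sum_congr rfl fun j _ => hω j
    have hg : (fun ω => ∑ j, (A₁ j ω) ^ 2)
        =ᵐ[P] P[(fun ω => ∑ j, Real.sign (X₁ ω j - X₂ ω j) * A₁ j ω)|m1] := by
      refine Filter.EventuallyEq.trans ?_ hsum.symm
      filter_upwards [hAae] with ω hω
      exact Finset.sum_congr rfl fun j _ => by rw [hω j]; ring
    have hfm : AEStronglyMeasurable[(fun (m : MeasurableSpace Ω) (_ : @Measure Ω m) => m) _ P]
        (fun ω => ∑ j, Real.sign (X₁ ω j - X₂ ω j) * A₁ j ω) P := by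
      refine hsumSφm.aestronglyMeasurable.congr ?_
      filter_upwards [hAae] with ω hω
      exact Finset.sum_congr rfl fun j _ => by rw [hω j]
    have hbd : ∀ᵐ ω ∂P, |∑ j, Real.sign (X₁ ω j - X₂ ω j) * A₁ j ω| ≤ ((p : NNReal) : ℝ) := by
      filter_upwards [hAae] with ω hω
      calc |∑ j, Real.sign (X₁ ω j - X₂ ω j) * A₁ j ω|
          ≤ ∑ j, |Real.sign (X₁ ω j - X₂ ω j) * A₁ j ω| := Finset.abs_sum_le_sum_abs _ _
      _ ≤ ∑ _j : Fin p, (1:ℝ) := Finset.sum_le_sum fun j _ => by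
            rw [hω j, abs_mul]
            exact mul_le_one₀ (abs_realSign_le _) (abs_nonneg _) (hφbd j _)
      _ = ((p : NNReal) : ℝ) := by simp
    exact variance_condexp_le_of_bound hm1 hfm hbd hg
  · -- second inequality
    set m2 : MeasurableSpace Ω :=
      MeasurableSpace.comap (fun ω => (X₁ ω, X₂ ω)) inferInstance with hm2def
    have hm2 : m2 ≤ _ := (hX₁.prodMk hX₂).comap_le
    have hpairm2 : Measurable[m2] (fun ω => (X₁ ω, X₂ ω)) := fun s hs => ⟨s, hs, rfl⟩
    have hSm2 : ∀ j, StronglyMeasurable[m2] (fun ω => Real.sign (X₁ ω j - X₂ ω j)) :=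
      fun j => (Measurable.stronglyMeasurable ((hk j).comp hpairm2))
    have hj : ∀ j, P[(fun ω => Real.sign (X₁ ω j - X₂ ω j) * Real.sign (X₁ ω j - X₃ ω j))|m2]
        =ᵐ[P] fun ω => Real.sign (X₁ ω j - X₂ ω j) * φ j (X₁ ω) := by
      intro j
      have e2 : P[(fun ω => Real.sign (X₁ ω j - X₂ ω j)) *
            (fun ω => Real.sign (X₁ ω j - X₃ ω j))|m2]
          =ᵐ[P] (fun ω => Real.sign (X₁ ω j - X₂ ω j)) *
            P[(fun ω => Real.sign (X₁ ω j - X₃ ω j))|m2] :=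
        condExp_stronglyMeasurable_mul_of_bound hm2 (hSm2 j) (hTint j) 1
          (ae_of_all _ fun ω => abs_realSign_le _)
      have e3 : (fun ω => Real.sign (X₁ ω j - X₂ ω j)) *
            P[(fun ω => Real.sign (X₁ ω j - X₃ ω j))|m2]
          =ᵐ[P] fun ω => Real.sign (X₁ ω j - X₂ ω j) * φ j (X₁ ω) := by
        filter_upwards [hcond3 j] with ω hω
        simp only [Pi.mul_apply]
        rw [← hω]
      exact e2.trans e3
    have hSTint : ∀ j, Integrable
        (fun ω => Real.sign (X₁ ω j - X₂ ω j) * Real.sign (X₁ ω j - X₃ ω j)) P := fun j =>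
      ⟨((hSmeas j).mul (hTmeas j)).aestronglyMeasurable,
        HasFiniteIntegral.of_bounded (C := 1) (ae_of_all _ fun ω => by
          calc ‖Real.sign (X₁ ω j - X₂ ω j) * Real.sign (X₁ ω j - X₃ ω j)‖
              = ‖Real.sign (X₁ ω j - X₂ ω j)‖ * ‖Real.sign (X₁ ω j - X₃ ω j)‖ := norm_mul _ _
          _ ≤ 1 * 1 := mul_le_mul (abs_realSign_le _) (abs_realSign_le _)
              (norm_nonneg _) zero_le_one
          _ = 1 := by ring)⟩
    have hsum : P[(fun ω => ∑ j, Real.sign (X₁ ω j - X₂ ω j) * Real.sign (X₁ ω j - X₃ ω j))|m2]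
        =ᵐ[P] fun ω => ∑ j, Real.sign (X₁ ω j - X₂ ω j) * φ j (X₁ ω) := by
      have h1 : (fun ω => ∑ j, Real.sign (X₁ ω j - X₂ ω j) * Real.sign (X₁ ω j - X₃ ω j))
          = ∑ j : Fin p, fun ω => Real.sign (X₁ ω j - X₂ ω j) * Real.sign (X₁ ω j - X₃ ω j) := by
        funext ω; simp [Finset.sum_apply]
      rw [h1]
      refine (condExp_finset_sum (fun j _ => hSTint j) m2).trans ?_
      have hall : ∀ᵐ ω ∂P, ∀ j,
          (P[(fun ω' => Real.sign (X₁ ω' j - X₂ ω' j) * Real.sign (X₁ ω' j - X₃ ω' j))|m2]) ω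
          = Real.sign (X₁ ω j - X₂ ω j) * φ j (X₁ ω) := ae_all_iff.2 fun j => hj j
      filter_upwards [hall] with ω hω
      simp only [Finset.sum_apply]
      exact Finset.sum_congr rfl fun j _ => hω j
    have hg : (fun ω => ∑ j, Real.sign (X₁ ω j - X₂ ω j) * A₁ j ω)
        =ᵐ[P] P[(fun ω => ∑ j, Real.sign (X₁ ω j - X₂ ω j) *
          Real.sign (X₁ ω j - X₃ ω j))|m2] := by
      refine Filter.EventuallyEq.trans ?_ hsum.symm
      filter_upwards [hAae] with ω hω
      exact Finset.sum_congr rfl fun j _ => by rw [hω j]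
    have hfm : AEStronglyMeasurable[(fun (m : MeasurableSpace Ω) (_ : @Measure Ω m) => m) _ P]
        (fun ω => ∑ j, Real.sign (X₁ ω j - X₂ ω j) * Real.sign (X₁ ω j - X₃ ω j)) P :=
      hsumSTm.aestronglyMeasurable
    have hbd : ∀ᵐ ω ∂P, |∑ j, Real.sign (X₁ ω j - X₂ ω j) * Real.sign (X₁ ω j - X₃ ω j)|
        ≤ ((p : NNReal) : ℝ) := by
      refine ae_of_all _ fun ω => ?_
      calc |∑ j, Real.sign (X₁ ω j - X₂ ω j) * Real.sign (X₁ ω j - X₃ ω j)|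
          ≤ ∑ j, |Real.sign (X₁ ω j - X₂ ω j) * Real.sign (X₁ ω j - X₃ ω j)| :=
            Finset.abs_sum_le_sum_abs _ _
      _ ≤ ∑ _j : Fin p, (1:ℝ) := Finset.sum_le_sum fun j _ => by
            rw [abs_mul]
            exact mul_le_one₀ (abs_realSign_le _) (abs_nonneg _) (abs_realSign_le _)
      _ = ((p : NNReal) : ℝ) := by simp
    exact variance_condexp_le_of_bound hm2 hfm hbd hg
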